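/- The change of variables x ↦ κx with parameters β ↦ −1+κβ, δ ↦ −1+κδ, ε ↦ −1+κε, η ↦ −1+κη in the γ = 0 master equation, followed by the limit κ → 0, gives the rational equation ((x̃_k−x_k+β)/(x_k−x̲_k+β))·((x_k−x_{k-1}+ε)/(x_{k+1}−x_k+ε))·((x̲_{k+1}−x_k−β+ε)/(x̲_{k+1}−x_k−δ+η))·((x_k−x̃_{k-1}−δ+η)/(x_k−x̃_{k-1}−β+ε)) = 1. Precisely: for each factor, lim_{κ→0} (e^{κa} + (−1+κβ))/κ = a + β (and analogously for the other factors), so the limit of the product equation is the stated rational equation. -/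

import Mathlib

open Filter Topology Complex

/-- The change of variables `x ↦ κx` with parameters `β ↦ −1+κβ`,
`δ ↦ −1+κδ`, `ε ↦ −1+κε`, `η ↦ −1+κη` in the `γ = 0` master equation,
followed by the limit `κ → 0`, gives the rational master Toda equation:
the left-hand side of the substituted equation tends, as `κ → 0`, to
`((a+β)/(b+β))·((c+ε)/(d+ε))·((u−β+ε)/(u−δ+η))·((v−δ+η)/(v−β+ε))`.
Here `a = x̃_k−x_k`, `b = x_k−x̲_k`, `c = x_k−x_{k-1}`, `d = x_{k+1}−x_k`,
`u = x̲_{k+1}−x_k`, `v = x_k−x̃_{k-1}`. -/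
lemma lim1 (a β : ℂ) :
    Tendsto (fun κ : ℂ => (exp (κ * a) - 1 + κ * β) / κ) (𝓝[≠] 0) (𝓝 (a + β)) := by
  have hd : HasDerivAt (fun κ : ℂ => exp (κ * a) + κ * β) (a + β) 0 := by
    have h1 : HasDerivAt (fun κ : ℂ => exp (κ * a)) (exp (0 * a) * a) 0 :=
      (Complex.hasDerivAt_exp ((0:ℂ) * a)).comp 0
        (by simpa using (hasDerivAt_id (0:ℂ)).mul_const a)
    have h2 : HasDerivAt (fun κ : ℂ => κ * β) β 0 := by
      simpa using (hasDerivAt_id (0:ℂ)).mul_const β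
    simpa [Pi.add_def] using h1.add h2
  have h := hasDerivAt_iff_tendsto_slope.mp hd
  refine h.congr' ?_
  filter_upwards [self_mem_nhdsWithin] with κ (hκ : κ ≠ 0)
  simp only [slope_def_field, sub_zero, zero_mul, Complex.exp_zero, mul_zero, add_zero, zero_add]
  congr 1
  ring

lemma lim2 (u β ε : ℂ) :
    Tendsto (fun κ : ℂ => ((-1 + κ * β) * exp (κ * u) - (-1 + κ * ε)) / κ)
      (𝓝[≠] 0) (𝓝 (β - u - ε)) := by
  have hd : HasDerivAt (fun κ : ℂ => (-1 + κ * β) * exp (κ * u) - (-1 + κ * ε))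
      (β - u - ε) 0 := by
    have h1 : HasDerivAt (fun κ : ℂ => (-1 : ℂ) + κ * β) β 0 := by
      simpa [Pi.add_def] using (hasDerivAt_const (0:ℂ) (-1:ℂ)).add ((hasDerivAt_id (0:ℂ)).mul_const β)
    have h2 : HasDerivAt (fun κ : ℂ => exp (κ * u)) (exp (0 * u) * u) 0 :=
      (Complex.hasDerivAt_exp ((0:ℂ) * u)).comp 0
        (by simpa using (hasDerivAt_id (0:ℂ)).mul_const u)
    have h3 : HasDerivAt (fun κ : ℂ => (-1 : ℂ) + κ * ε) ε 0 := by
      simpa [Pi.add_def] using (hasDerivAt_const (0:ℂ) (-1:ℂ)).add ((hasDerivAt_id (0:ℂ)).mul_const ε)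
    have h := (h1.mul h2).sub h3
    simp only [Pi.sub_def, Pi.mul_def] at h
    convert h using 1
    · rfl
    · rfl
    simp [Complex.exp_zero]
    ring
  have h := hasDerivAt_iff_tendsto_slope.mp hd
  refine h.congr' ?_
  filter_upwards [self_mem_nhdsWithin] with κ (hκ : κ ≠ 0)
  simp only [slope_def_field, sub_zero, zero_mul, Complex.exp_zero, mul_zero, add_zero, zero_add]
  congr 1
  ring

theorem master_rational_limit
    (β δ' ε η a b c d u v : ℂ)
    (h1 : a + β ≠ 0) (h2 : b + β ≠ 0) (h3 : c + ε ≠ 0) (h4 : d + ε ≠ 0)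
    (h5 : u - β + ε ≠ 0) (h6 : u - δ' + η ≠ 0)
    (h7 : v - δ' + η ≠ 0) (h8 : v - β + ε ≠ 0) :
    Tendsto (fun κ : ℂ =>
      ((exp (κ * a) - 1 + κ * β) / (exp (κ * b) - 1 + κ * β)) *
      ((exp (κ * c) - 1 + κ * ε) / (exp (κ * d) - 1 + κ * ε)) *
      (((-1 + κ * β) * exp (κ * u) - (-1 + κ * ε)) /
        ((-1 + κ * δ') * exp (κ * u) - (-1 + κ * η))) *
      (((-1 + κ * δ') * exp (κ * v) - (-1 + κ * η)) /
        ((-1 + κ * β) * exp (κ * v) - (-1 + κ * ε))))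
      (𝓝[≠] 0)
      (𝓝 (((a + β) / (b + β)) * ((c + ε) / (d + ε)) *
        ((u - β + ε) / (u - δ' + η)) * ((v - δ' + η) / (v - β + ε)))) := by
  have h6' : δ' - u - η ≠ 0 := fun h => h6 (by linear_combination -h)
  have h8' : β - v - ε ≠ 0 := fun h => h8 (by linear_combination -h)
  have T : Tendsto (fun κ : ℂ =>
      (((exp (κ * a) - 1 + κ * β) / κ) / ((exp (κ * b) - 1 + κ * β) / κ)) *
      (((exp (κ * c) - 1 + κ * ε) / κ) / ((exp (κ * d) - 1 + κ * ε) / κ)) *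
      ((((-1 + κ * β) * exp (κ * u) - (-1 + κ * ε)) / κ) /
        (((-1 + κ * δ') * exp (κ * u) - (-1 + κ * η)) / κ)) *
      ((((-1 + κ * δ') * exp (κ * v) - (-1 + κ * η)) / κ) /
        (((-1 + κ * β) * exp (κ * v) - (-1 + κ * ε)) / κ)))
      (𝓝[≠] 0)
      (𝓝 (((a + β) / (b + β)) * ((c + ε) / (d + ε)) *
        ((β - u - ε) / (δ' - u - η)) * ((δ' - v - η) / (β - v - ε)))) :=
    ((((lim1 a β).div (lim1 b β) h2).mul ((lim1 c ε).div (lim1 d ε) h4)).mul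
      ((lim2 u β ε).div (lim2 u δ' η) h6')).mul
      ((lim2 v δ' η).div (lim2 v β ε) h8')
  have heq : ((β - u - ε) / (δ' - u - η)) = ((u - β + ε) / (u - δ' + η)) := by
    rw [← neg_div_neg_eq]; ring_nf
  have heq2 : ((δ' - v - η) / (β - v - ε)) = ((v - δ' + η) / (v - β + ε)) := by
    rw [← neg_div_neg_eq]; ring_nf
  rw [heq, heq2] at T
  refine T.congr' ?_
  filter_upwards [self_mem_nhdsWithin] with κ (hκ : κ ≠ 0)
  have key : ∀ x y : ℂ, x / κ / (y / κ) = x / y := fun x y => by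
    rw [div_div_eq_mul_div, div_mul_cancel₀ _ hκ]
  rw [key, key, key, key]
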